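/- Let d ≥ 1 and let C be a real d×d matrix. For every radius r ≥ 0, the integral of x ↦ 1 − (1/6)⟨x, C x⟩ over the closed Euclidean ball of radius r centered at the origin in ℝ^d equals ω_d · r^d · (1 − (trace C) · r² / (6(d + 2))), where ω_d is the Lebesgue volume of the unit ball in ℝ^d. -/

import Mathlib

open MeasureTheory Metric Set

section Aux

/-- Substituting a linear isometry equivalence fixing the origin in a set integral over a
closed ball. -/
lemma setIntegral_comp_lie {d : ℕ} (e : EuclideanSpace ℝ (Fin d) ≃ₗᵢ[ℝ] EuclideanSpace ℝ (Fin d))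
    (f : EuclideanSpace ℝ (Fin d) → ℝ) (r : ℝ) :
    ∫ x in closedBall (0 : EuclideanSpace ℝ (Fin d)) r, f (e x) =
      ∫ x in closedBall (0 : EuclideanSpace ℝ (Fin d)) r, f x := by
  have h := e.measurePreserving.setIntegral_preimage_emb
    e.toHomeomorph.measurableEmbedding f (closedBall 0 r)
  rwa [e.preimage_closedBall, map_zero] at h

lemma integrableOn_coord_mul {d : ℕ} (μ ν : Fin d) (r : ℝ) :
    IntegrableOn (fun x : EuclideanSpace ℝ (Fin d) => x μ * x ν)
      (closedBall (0 : EuclideanSpace ℝ (Fin d)) r) volume := by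
  have hc : Continuous fun x : EuclideanSpace ℝ (Fin d) => x μ * x ν :=
    ((EuclideanSpace.proj μ).continuous).mul ((EuclideanSpace.proj ν).continuous)
  exact hc.continuousOn.integrableOn_compact (isCompact_closedBall _ _)

/-- The integral of `‖x‖²` over the closed ball of radius `r`. -/
lemma integral_norm_sq_closedBall (d : ℕ) (hd : 1 ≤ d) (r : ℝ) (hr : 0 ≤ r) :
    ∫ x in closedBall (0 : EuclideanSpace ℝ (Fin d)) r, ‖x‖ ^ 2 =
      (d : ℝ) * (volume (closedBall (0 : EuclideanSpace ℝ (Fin d)) 1)).toReal *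
        (r ^ (d + 2) / (d + 2)) := by
  haveI : Nontrivial (EuclideanSpace ℝ (Fin d)) :=
    Module.nontrivial_of_finrank_pos (R := ℝ) (by rw [finrank_euclideanSpace_fin]; exact hd)
  set ω := (volume (closedBall (0 : EuclideanSpace ℝ (Fin d)) 1)).toReal with hω
  have hdim : Module.finrank ℝ (EuclideanSpace ℝ (Fin d)) = d := finrank_euclideanSpace_fin
  have hball : (volume (ball (0 : EuclideanSpace ℝ (Fin d)) 1)).toReal = ω := by
    rw [hω, Measure.addHaar_closedBall_eq_addHaar_ball]
  -- rewrite the set integral as a full-space integral of a function of the norm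
  have h1 : ∫ x in closedBall (0 : EuclideanSpace ℝ (Fin d)) r, ‖x‖ ^ 2 =
      ∫ x : EuclideanSpace ℝ (Fin d), Set.indicator (Iic r) (fun t => t ^ 2) ‖x‖ := by
    rw [← integral_indicator measurableSet_closedBall]
    congr 1
    ext x
    by_cases hx : x ∈ closedBall (0 : EuclideanSpace ℝ (Fin d)) r
    · rw [Set.indicator_of_mem hx, Set.indicator_of_mem (by
        simpa [mem_closedBall_zero_iff] using hx)]
    · rw [Set.indicator_of_notMem hx, Set.indicator_of_notMem (by
        simpa [mem_closedBall_zero_iff] using hx)]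
  rw [h1, integral_fun_norm_addHaar volume (Set.indicator (Iic r) (fun t => t ^ 2)), hdim]
  have h2 : ∫ y in Ioi (0 : ℝ), y ^ (d - 1) • Set.indicator (Iic r) (fun t => t ^ 2) y =
      ∫ y in Ioc (0 : ℝ) r, y ^ (d + 1) := by
    rw [← integral_indicator measurableSet_Ioc, ← integral_indicator measurableSet_Ioi]
    congr 1
    ext y
    by_cases hy : y ∈ Ioi (0 : ℝ)
    · rw [Set.indicator_of_mem hy]
      by_cases hyr : y ∈ Iic r
      · have hde : d - 1 + 2 = d + 1 := by omega
        rw [Set.indicator_of_mem hyr, Set.indicator_of_mem (Set.mem_Ioc.2 ⟨hy, hyr⟩),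
          smul_eq_mul, ← pow_add, hde]
      · rw [Set.indicator_of_notMem hyr, Set.indicator_of_notMem
          (fun h => hyr h.2), smul_eq_mul, mul_zero]
    · rw [Set.indicator_of_notMem hy, Set.indicator_of_notMem (fun h => hy h.1)]
  have h3 : ∫ y in Ioc (0 : ℝ) r, y ^ (d + 1) = r ^ (d + 2) / (d + 2) := by
    rw [← intervalIntegral.integral_of_le hr, integral_pow]
    push_cast
    ring
  rw [h2, h3, measureReal_def, hball]
  rw [nsmul_eq_mul, smul_eq_mul]
  ring

end Aux

/-- For `d ≥ 1`, a real `d×d` matrix `C`, and radius `r ≥ 0`, the integral of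
`x ↦ 1 − (1/6)⟨x, C x⟩` over the closed Euclidean ball of radius `r` in `ℝ^d` equals
`ω_d · r^d · (1 − (trace C) · r² / (6(d+2)))`, where `ω_d` is the Lebesgue volume of the
unit ball. -/
theorem stmt_1 (d : ℕ) (hd : 1 ≤ d) (C : Matrix (Fin d) (Fin d) ℝ) (r : ℝ) (hr : 0 ≤ r) :
    (∫ x in Metric.closedBall (0 : EuclideanSpace ℝ (Fin d)) r,
        (1 - (1 / 6 : ℝ) * ∑ μ : Fin d, ∑ ν : Fin d, C μ ν * x μ * x ν)) =
      (volume (Metric.closedBall (0 : EuclideanSpace ℝ (Fin d)) 1)).toReal * r ^ d *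
        (1 - C.trace * r ^ 2 / (6 * ((d : ℝ) + 2))) := by
  haveI : Nontrivial (EuclideanSpace ℝ (Fin d)) :=
    Module.nontrivial_of_finrank_pos (R := ℝ) (by rw [finrank_euclideanSpace_fin]; exact hd)
  classical
  set B := Metric.closedBall (0 : EuclideanSpace ℝ (Fin d)) r with hB
  set ω := (volume (Metric.closedBall (0 : EuclideanSpace ℝ (Fin d)) 1)).toReal with hω
  set V : ℝ := ω * (r ^ (d + 2) / (d + 2)) with hV
  -- off-diagonal integrals vanish
  have key_off : ∀ μ ν : Fin d, μ ≠ ν → (∫ x in B, x μ * x ν) = 0 := by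
    intro μ ν hμν
    set e : EuclideanSpace ℝ (Fin d) ≃ₗᵢ[ℝ] EuclideanSpace ℝ (Fin d) :=
      LinearIsometryEquiv.piLpCongrRight 2
        (fun i => if i = μ then LinearIsometryEquiv.neg ℝ else LinearIsometryEquiv.refl ℝ ℝ)
      with he
    have happ : ∀ (x : EuclideanSpace ℝ (Fin d)) (i : Fin d),
        e x i = if i = μ then -x i else x i := by
      intro x i
      simp only [he, LinearIsometryEquiv.piLpCongrRight_apply]
      by_cases h : i = μ
      · subst h; simp
      · simp [h]
    have h := setIntegral_comp_lie e (fun x => x μ * x ν) r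
    have h2 : (∫ x in B, (fun x : EuclideanSpace ℝ (Fin d) => x μ * x ν) (e x)) =
        - ∫ x in B, x μ * x ν := by
      rw [← integral_neg]
      apply setIntegral_congr_fun measurableSet_closedBall
      intro x _
      simp only [happ]
      rw [if_neg hμν.symm]
      simp
    rw [h2] at h
    linarith [h]
  -- all diagonal integrals are equal
  have key_diag_eq : ∀ μ ν : Fin d, (∫ x in B, x μ * x μ) = ∫ x in B, x ν * x ν := by
    intro μ ν
    set e : EuclideanSpace ℝ (Fin d) ≃ₗᵢ[ℝ] EuclideanSpace ℝ (Fin d) :=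
      LinearIsometryEquiv.piLpCongrLeft 2 ℝ ℝ (Equiv.swap μ ν) with he
    have happ : ∀ x : EuclideanSpace ℝ (Fin d), e x ν = x μ := by
      intro x
      simp only [he, LinearIsometryEquiv.piLpCongrLeft_apply, Equiv.piCongrLeft'_apply,
        Equiv.symm_swap]
      rw [Equiv.swap_apply_right]
    have h := setIntegral_comp_lie e (fun x => x ν * x ν) r
    have h2 : (∫ x in B, (fun x : EuclideanSpace ℝ (Fin d) => x ν * x ν) (e x)) =
        ∫ x in B, x μ * x μ := by
      apply setIntegral_congr_fun measurableSet_closedBall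
      intro x _
      simp only [happ]
    rw [h2] at h
    exact h
  -- the sum of diagonal integrals is the integral of ‖x‖²
  have hsum : (∑ μ : Fin d, ∫ x in B, x μ * x μ) = (d : ℝ) * ω * (r ^ (d + 2) / (d + 2)) := by
    rw [← integral_finset_sum _ (fun μ _ => integrableOn_coord_mul μ μ r)]
    rw [← integral_norm_sq_closedBall d hd r hr]
    apply setIntegral_congr_fun measurableSet_closedBall
    intro x _
    show ∑ i, x i * x i = ‖x‖ ^ 2
    rw [EuclideanSpace.norm_eq, Real.sq_sqrt (Finset.sum_nonneg fun i _ => sq_nonneg _)]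
    exact Finset.sum_congr rfl fun i _ => by rw [Real.norm_eq_abs, sq_abs]; ring
  -- hence each diagonal integral equals V
  have key_diag : ∀ μ : Fin d, (∫ x in B, x μ * x μ) = V := by
    intro μ
    have hall : ∀ ν : Fin d, (∫ x in B, x ν * x ν) = ∫ x in B, x μ * x μ := fun ν =>
      key_diag_eq ν μ
    have : (∑ ν : Fin d, ∫ x in B, x ν * x ν) = d * ∫ x in B, x μ * x μ := by
      rw [Finset.sum_congr rfl fun ν _ => hall ν, Finset.sum_const, Finset.card_univ,
        Fintype.card_fin, nsmul_eq_mul]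
    rw [this] at hsum
    have hd' : (d : ℝ) ≠ 0 := Nat.cast_ne_zero.2 (by omega)
    rw [hV]
    refine mul_left_cancel₀ hd' (hsum.trans ?_)
    ring
  have key : ∀ μ ν : Fin d, (∫ x in B, x μ * x ν) = if μ = ν then V else 0 := by
    intro μ ν
    by_cases h : μ = ν
    · subst h; simp [key_diag μ]
    · simp [h, key_off μ ν h]
  -- integrability of the quadratic form
  have hQint : IntegrableOn
      (fun x : EuclideanSpace ℝ (Fin d) => ∑ μ : Fin d, ∑ ν : Fin d, C μ ν * x μ * x ν)
      B volume := by
    apply integrable_finset_sum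
    intro μ _
    apply integrable_finset_sum
    intro ν _
    simpa [mul_assoc] using (integrableOn_coord_mul μ ν r).const_mul (C μ ν)
  have h1int : IntegrableOn (fun _ : EuclideanSpace ℝ (Fin d) => (1 : ℝ)) B volume := by
    refine integrableOn_const ?_
    exact (isCompact_closedBall _ _).measure_lt_top.ne
  -- split the integral
  rw [integral_sub h1int (hQint.const_mul _)]
  have hconst : (∫ _ in B, (1 : ℝ)) = ω * r ^ d := by
    rw [setIntegral_const, smul_eq_mul, mul_one, hB, measureReal_def,
      Measure.addHaar_closedBall volume (0 : EuclideanSpace ℝ (Fin d)) hr,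
      finrank_euclideanSpace_fin, hω, Measure.addHaar_closedBall_eq_addHaar_ball,
      ENNReal.toReal_mul, ENNReal.toReal_ofReal (pow_nonneg hr _), mul_comm]
  have hQ : (∫ x in B, ∑ μ : Fin d, ∑ ν : Fin d, C μ ν * x μ * x ν) = C.trace * V := by
    rw [integral_finset_sum _ (fun μ _ => by
      apply integrable_finset_sum
      intro ν _
      simpa [mul_assoc] using (integrableOn_coord_mul μ ν r).const_mul (C μ ν))]
    have : ∀ μ : Fin d, (∫ x in B, ∑ ν : Fin d, C μ ν * x μ * x ν) = C μ μ * V := by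
      intro μ
      rw [integral_finset_sum _ (fun ν _ => by
        simpa [mul_assoc] using (integrableOn_coord_mul μ ν r).const_mul (C μ ν))]
      have : ∀ ν : Fin d, (∫ x in B, C μ ν * x μ * x ν) = C μ ν * if μ = ν then V else 0 := by
        intro ν
        rw [← key μ ν, ← integral_const_mul]
        congr 1
        ext x
        ring
      rw [Finset.sum_congr rfl fun ν _ => this ν]
      simp [Finset.sum_ite_eq, Matrix.trace]
    rw [Finset.sum_congr rfl fun μ _ => this μ, ← Finset.sum_mul, Matrix.trace]
    rfl
  rw [integral_const_mul, hQ, hconst, hV]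
  have hd2 : ((d : ℝ) + 2) ≠ 0 := by positivity
  have hrp : r ^ (d + 2) = r ^ d * r ^ 2 := pow_add r d 2
  field_simp
  rw [hrp]
  ring
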